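/- For all integers n ≥ 2 and k ≥ 2 with F_k ≤ n < F_{k+1}, the least natural number m such that a(m) ≥ n equals F_k + 1; that is, a(F_k + 1) ≥ n and a(i) < n for all i < F_k + 1. -/

import Mathlib

/-- The sequence A105774: `a n = n` for `n ≤ 1`, and
`a n = fib (j+1) - a (n - fib j)` where `j ≥ 2` is the unique index
with `fib j < n ≤ fib (j+1)` (realized as the greatest `j ≤ n` with `fib j < n`). -/
def a (n : ℕ) : ℕ :=
  if _h : n ≤ 1 then n
  else
    Nat.fib (Nat.findGreatest (fun j => Nat.fib j < n) n + 1) -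
      a (n - Nat.fib (Nat.findGreatest (fun j => Nat.fib j < n) n))
decreasing_by
  have h2 : 2 ≤ n := by omega
  have hj : 2 ≤ Nat.findGreatest (fun j => Nat.fib j < n) n :=
    Nat.le_findGreatest h2 (by show Nat.fib 2 < n; simp [Nat.fib_two]; omega)
  have hpos : 0 < Nat.fib (Nat.findGreatest (fun j => Nat.fib j < n) n) :=
    Nat.fib_pos.mpr (by omega)
  omega

lemma a_le_one (n : ℕ) (h : n ≤ 1) : a n = n := by rw [a]; simp [h]

lemma fib_split (j : ℕ) (hj : 1 ≤ j) :
    Nat.fib (j + 1) = Nat.fib j + Nat.fib (j - 1) := by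
  obtain ⟨p, rfl⟩ := Nat.exists_eq_add_of_le hj
  simp [Nat.add_comm 1 p, Nat.fib_add_two, Nat.add_comm (Nat.fib p)]

lemma J_spec (n : ℕ) (h : 2 ≤ n) :
    2 ≤ Nat.findGreatest (fun j => Nat.fib j < n) n ∧
    Nat.fib (Nat.findGreatest (fun j => Nat.fib j < n) n) < n ∧
    n ≤ Nat.fib (Nat.findGreatest (fun j => Nat.fib j < n) n + 1) := by
  have hf2 : Nat.fib 2 < n := by simp [Nat.fib_two]; omega
  have h2 : 2 ≤ Nat.findGreatest (fun j => Nat.fib j < n) n := Nat.le_findGreatest h hf2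
  have hlt : Nat.fib (Nat.findGreatest (fun j => Nat.fib j < n) n) < n :=
    Nat.findGreatest_spec (P := fun j => Nat.fib j < n) h hf2
  refine ⟨h2, hlt, ?_⟩
  rcases lt_or_eq_of_le (Nat.findGreatest_le (P := fun j => Nat.fib j < n) n) with hJn | hJn
  · have := Nat.findGreatest_is_greatest (P := fun j => Nat.fib j < n) (n := n)
      (k := Nat.findGreatest (fun j => Nat.fib j < n) n + 1) (by omega) (by omega)
    simpa using this
  · rw [hJn] at hlt ⊢
    have h1 : n ≤ Nat.fib n + 1 := Nat.le_fib_add_one n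
    have := fib_split n (by omega)
    have hp : 1 ≤ Nat.fib (n - 1) := Nat.fib_pos.mpr (by omega)
    omega

lemma J_eq (n j : ℕ) (hj : 2 ≤ j) (hl : Nat.fib j < n) (hu : n ≤ Nat.fib (j + 1)) :
    Nat.findGreatest (fun i => Nat.fib i < n) n = j := by
  have hn : 2 ≤ n := by
    have : 1 ≤ Nat.fib j := Nat.fib_pos.mpr (by omega)
    omega
  have hjn : j ≤ n := le_trans (Nat.le_fib_add_one j) (by omega)
  have hge : j ≤ Nat.findGreatest (fun i => Nat.fib i < n) n := Nat.le_findGreatest hjn hl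
  obtain ⟨h2, hlt, -⟩ := J_spec n hn
  by_contra hne
  have : Nat.fib (j + 1) ≤ Nat.fib (Nat.findGreatest (fun i => Nat.fib i < n) n) :=
    Nat.fib_mono (by omega)
  omega

lemma a_rec' (m j : ℕ) (hj : 2 ≤ j) (hl : Nat.fib j < m) (hu : m ≤ Nat.fib (j + 1)) :
    a m = Nat.fib (j + 1) - a (m - Nat.fib j) := by
  have hm2 : 2 ≤ m := by
    have : 1 ≤ Nat.fib j := Nat.fib_pos.mpr (by omega)
    omega
  rw [a]; rw [dif_neg (by omega)]
  rw [J_eq m j hj hl hu]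

lemma exists_j (m : ℕ) (h : 2 ≤ m) :
    ∃ j, 2 ≤ j ∧ Nat.fib j < m ∧ m ≤ Nat.fib (j + 1) :=
  ⟨_, (J_spec m h).1, (J_spec m h).2.1, (J_spec m h).2.2⟩

lemma key : ∀ m : ℕ, (1 ≤ m → 1 ≤ a m) ∧
    (∀ j, 2 ≤ j → Nat.fib j < m → m ≤ Nat.fib (j + 1) → a m ≤ Nat.fib (j + 1) - 1) := by
  intro m
  induction m using Nat.strong_induction_on with
  | _ m ih =>
  constructor
  · intro hm1
    rcases le_or_gt m 1 with hle | hgt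
    · rw [a_le_one m hle]; omega
    · have hm2 : 2 ≤ m := hgt
      obtain ⟨J, hJ2, hJl, hJu⟩ := exists_j m hm2
      rw [a_rec' m J hJ2 hJl hJu]
      have hfibJpos : 1 ≤ Nat.fib J := Nat.fib_pos.mpr (by omega)
      have ht1 : 1 ≤ m - Nat.fib J := by omega
      have htlt : m - Nat.fib J < m := by omega
      have hfibJ1 : 2 ≤ Nat.fib (J + 1) := by
        have : Nat.fib 3 ≤ Nat.fib (J + 1) := Nat.fib_mono (by omega)
        simpa [show Nat.fib 3 = 2 by decide] using this
      have hub : a (m - Nat.fib J) ≤ Nat.fib (J + 1) - 1 := by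
        rcases le_or_gt (m - Nat.fib J) 1 with h1 | h1
        · rw [a_le_one _ h1]; omega
        · obtain ⟨j', hj2, hjl, hju⟩ := exists_j (m - Nat.fib J) h1
          have hbd := (ih _ htlt).2 j' hj2 hjl hju
          have htf : m - Nat.fib J ≤ Nat.fib (J - 1) := by
            have := fib_split J (by omega)
            omega
          have hj'lt : j' + 1 ≤ J - 1 := by
            by_contra hc
            have : Nat.fib (J - 1) ≤ Nat.fib j' := Nat.fib_mono (by omega)
            omega
          have : Nat.fib (j' + 1) ≤ Nat.fib (J + 1) := Nat.fib_mono (by omega)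
          omega
      omega
  · intro j hj2 hjl hju
    have hfibpos : 1 ≤ Nat.fib j := Nat.fib_pos.mpr (by omega)
    rw [a_rec' m j hj2 hjl hju]
    have := (ih (m - Nat.fib j) (by omega)).1 (by omega)
    omega

/-- For `n ≥ 2` with `F k ≤ n < F (k+1)` (`k ≥ 2`), the least `m` with
`a m ≥ n` is `F k + 1`: `a (F k + 1) ≥ n` and `a i < n` for all `i < F k + 1`. -/
theorem a105774_least_reaching (n k : ℕ) (hn : 2 ≤ n) (hk : 2 ≤ k)
    (h1 : Nat.fib k ≤ n) (h2 : n < Nat.fib (k + 1)) :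
    n ≤ a (Nat.fib k + 1) ∧ ∀ i : ℕ, i < Nat.fib k + 1 → a i < n := by
  constructor
  · have hle : Nat.fib k + 1 ≤ Nat.fib (k + 1) := Nat.fib_lt_fib_succ hk
    rw [a_rec' (Nat.fib k + 1) k hk (by omega) hle]
    simp [a_le_one 1 le_rfl]
    omega
  · intro i hi
    rcases le_or_gt i 1 with h1' | h1'
    · rw [a_le_one i h1']; omega
    · obtain ⟨j', hj2, hjl, hju⟩ := exists_j i h1'
      have hb := (key i).2 j' hj2 hjl hju
      have hjk : j' + 1 ≤ k := by
        by_contra hc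
        have : Nat.fib k ≤ Nat.fib j' := Nat.fib_mono (by omega)
        omega
      have : Nat.fib (j' + 1) ≤ Nat.fib k := Nat.fib_mono hjk
      omega
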